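/- Let M be a nonzero comultiplication R-module whose large sum graph Ǵ(M) is not connected. Then M has exactly two minimal submodules. -/

import Mathlib

/-- `M` is a comultiplication `R`-module: every submodule is of the form `(0 :_M I)`. -/
def IsComultiplication (R M : Type*) [CommRing R] [AddCommGroup M] [Module R M] : Prop :=
  ∀ N : Submodule R M, ∃ I : Ideal R, ∀ m : M, m ∈ N ↔ ∀ r ∈ I, r • m = 0

/-- A submodule is large (essential) if it meets every nonzero submodule nontrivially. -/
def IsLarge {R M : Type*} [CommRing R] [AddCommGroup M] [Module R M]
    (N : Submodule R M) : Prop :=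
  ∀ L : Submodule R M, L ≠ ⊥ → N ⊓ L ≠ ⊥

/-- The vertices of the large sum graph: nonzero non-large submodules. -/
abbrev LargeSumVtx (R M : Type*) [CommRing R] [AddCommGroup M] [Module R M] :=
  {N : Submodule R M // N ≠ ⊥ ∧ ¬ IsLarge N}

/-- The large sum graph: distinct nonzero non-large submodules `N, K` are adjacent
iff `N + K` is not large. -/
def largeSumGraph (R M : Type*) [CommRing R] [AddCommGroup M] [Module R M] :
    SimpleGraph (LargeSumVtx R M) where
  Adj N K := N ≠ K ∧ ¬ IsLarge (N.1 ⊔ K.1)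
  symm := ⟨fun a b ⟨h1, h2⟩ => ⟨h1.symm, by rwa [sup_comm]⟩⟩
  loopless := ⟨fun a h => h.1 rfl⟩

section Aux

variable {R M : Type*} [CommRing R] [AddCommGroup M] [Module R M]

lemma isLarge_mono {A B : Submodule R M} (hAB : A ≤ B) (hA : IsLarge A) : IsLarge B := by
  intro L hL hbot
  exact hA L hL (le_bot_iff.mp (hbot ▸ inf_le_inf_right L hAB))

lemma isLarge_inf {A B : Submodule R M} (hA : IsLarge A) (hB : IsLarge B) :
    IsLarge (A ⊓ B) := by
  intro L hL
  have h2 : A ⊓ (B ⊓ L) ≠ ⊥ := hA _ (hB L hL)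
  rwa [← inf_assoc] at h2

/-- In a comultiplication module there are no "diagonal" submodules: if `Z ≤ A ⊔ B`
with `A ⊓ B = ⊥` and `Z` meets both `A` and `B` trivially, then `Z = ⊥`. -/
lemma no_diagonal (hc : IsComultiplication R M) {A B Z : Submodule R M}
    (hAB : A ⊓ B = ⊥) (hZ : Z ≤ A ⊔ B) (hZA : Z ⊓ A = ⊥) (hZB : Z ⊓ B = ⊥) :
    Z = ⊥ := by
  obtain ⟨I, hI⟩ := hc Z
  rw [eq_bot_iff]
  intro z hz
  obtain ⟨a, ha, b, hb, hab⟩ := Submodule.mem_sup.mp (hZ hz)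
  have haZ : a ∈ Z := by
    rw [hI]
    intro r hr
    have hz0 : r • (a + b) = 0 := by rw [hab]; exact (hI z).mp hz r hr
    have hsum : r • a + r • b = 0 := by rwa [smul_add] at hz0
    have hmem : r • a ∈ A ⊓ B := by
      refine ⟨A.smul_mem r ha, ?_⟩
      have : r • a = -(r • b) := eq_neg_of_add_eq_zero_left hsum
      rw [this]
      exact B.neg_mem (B.smul_mem r hb)
    rw [hAB] at hmem
    exact hmem
  have ha0 : a = 0 := by
    have : a ∈ Z ⊓ A := ⟨haZ, ha⟩
    rwa [hZA, Submodule.mem_bot] at this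
  have hzb : z ∈ Z ⊓ B := ⟨hz, by rw [← hab, ha0, zero_add]; exact hb⟩
  rwa [hZB, Submodule.mem_bot] at hzb

/-- A nonzero element killed by a maximal ideal spans an atom. -/
lemma atom_of_maximal_kills {𝔪 : Ideal R} (hm : 𝔪.IsMaximal) {x : M} (hx : x ≠ 0)
    (hkill : ∀ r ∈ 𝔪, r • x = 0) : IsAtom (Submodule.span R {x}) := by
  constructor
  · simpa [Submodule.span_singleton_eq_bot] using hx
  · intro b hb
    by_contra hb0
    obtain ⟨y, hyb, hy0⟩ := (Submodule.ne_bot_iff b).mp hb0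
    obtain ⟨c, hc⟩ := Submodule.mem_span_singleton.mp (hb.le hyb)
    have hcm : c ∉ 𝔪 := by
      intro hcmem
      exact hy0 (by rw [← hc]; exact hkill c hcmem)
    obtain ⟨d, i, hi, hdi⟩ := hm.exists_inv hcm
    have hxb : x ∈ b := by
      have : (d * c + i) • x = x := by rw [hdi, one_smul]
      rw [add_smul, mul_smul, hc] at this
      rw [← this, hkill i hi, add_zero]
      exact b.smul_mem d hyb
    exact hb.not_ge (Submodule.span_le.mpr (Set.singleton_subset_iff.mpr hxb))

/-- In a comultiplication module, every nonzero submodule contains an atom. -/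
lemma exists_atom_le (hc : IsComultiplication R M) {X : Submodule R M} (hX : X ≠ ⊥) :
    ∃ S : Submodule R M, IsAtom S ∧ S ≤ X := by
  obtain ⟨x, hxX, hx0⟩ := (Submodule.ne_bot_iff X).mp hX
  have htor : Ideal.torsionOf R M x ≠ ⊤ := by
    intro htop
    have : (1 : R) ∈ Ideal.torsionOf R M x := htop ▸ Submodule.mem_top
    rw [Ideal.mem_torsionOf_iff, one_smul] at this
    exact hx0 this
  obtain ⟨𝔪, hmax, hle⟩ := Ideal.exists_le_maximal _ htor
  by_cases hY : (𝔪 • Submodule.span R {x} : Submodule R M) = ⊥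
  · refine ⟨Submodule.span R {x}, atom_of_maximal_kills hmax hx0 ?_, ?_⟩
    · intro r hr
      have : r • x ∈ (𝔪 • Submodule.span R {x} : Submodule R M) :=
        Submodule.smul_mem_smul hr (Submodule.mem_span_singleton_self x)
      rwa [hY, Submodule.mem_bot] at this
    · exact Submodule.span_le.mpr (Set.singleton_subset_iff.mpr hxX)
  · have hxY : x ∉ (𝔪 • Submodule.span R {x} : Submodule R M) := by
      intro hmem
      obtain ⟨a, haI, hax⟩ := Submodule.mem_smul_span_singleton.mp hmem
      have h1a : (1 - a) ∈ Ideal.torsionOf R M x := by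
        rw [Ideal.mem_torsionOf_iff, sub_smul, one_smul, hax, sub_self]
      have : (1 : R) ∈ 𝔪 := by
        have := 𝔪.add_mem (hle h1a) haI
        rwa [sub_add_cancel] at this
      exact hmax.ne_top ((Ideal.eq_top_iff_one 𝔪).mpr this)
    obtain ⟨I, hI⟩ := hc (𝔪 • Submodule.span R {x})
    have hnall : ¬ ∀ r ∈ I, r • x = 0 := fun hall => hxY ((hI x).mpr hall)
    push_neg at hnall
    obtain ⟨r, hrI, hrx⟩ := hnall
    refine ⟨Submodule.span R {r • x}, atom_of_maximal_kills hmax hrx ?_, ?_⟩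
    · intro t ht
      have h1 : t • x ∈ (𝔪 • Submodule.span R {x} : Submodule R M) :=
        Submodule.smul_mem_smul ht (Submodule.mem_span_singleton_self x)
      have h2 : r • (t • x) = 0 := (hI _).mp h1 r hrI
      rw [smul_comm t r x]
      exact h2
    · exact Submodule.span_le.mpr (Set.singleton_subset_iff.mpr (X.smul_mem r hxX))

end Aux

/-- If the (non-null) large sum graph of a nonzero comultiplication module is not connected,
then the module has exactly two minimal submodules. -/
theorem stmt6 {R M : Type*} [CommRing R] [AddCommGroup M] [Module R M]
    [Nontrivial M] (hc : IsComultiplication R M)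
    [Nonempty (LargeSumVtx R M)]
    (h : ¬ (largeSumGraph R M).Connected) :
    ∃ S₁ S₂ : Submodule R M, S₁ ≠ S₂ ∧ {S : Submodule R M | IsAtom S} = {S₁, S₂} := by
  classical
  -- get two non-reachable vertices
  have hpre : ¬ (largeSumGraph R M).Preconnected := fun hp => h ⟨hp⟩
  simp only [SimpleGraph.Preconnected, not_forall] at hpre
  obtain ⟨u, v, huv⟩ := hpre
  -- vertices attached to nonzero submodules of u.1 (resp. v.1), with reachability
  have vert_left : ∀ (A : Submodule R M) (hA0 : A ≠ ⊥) (hAle : A ≤ u.1),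
      (largeSumGraph R M).Reachable u ⟨A, hA0, fun hl => u.2.2 (isLarge_mono hAle hl)⟩ := by
    intro A hA0 hAle
    by_cases hA : A = u.1
    · have : u = ⟨A, hA0, fun hl => u.2.2 (isLarge_mono hAle hl)⟩ := Subtype.ext hA.symm
      rw [← this]
    · refine SimpleGraph.Adj.reachable ?_
      refine ⟨fun he => hA (congrArg Subtype.val he).symm, ?_⟩
      have hsup : u.1 ⊔ A = u.1 := sup_eq_left.mpr hAle
      rw [hsup]
      exact u.2.2
  have vert_right : ∀ (B : Submodule R M) (hB0 : B ≠ ⊥) (hBle : B ≤ v.1),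
      (largeSumGraph R M).Reachable (⟨B, hB0, fun hl => v.2.2 (isLarge_mono hBle hl)⟩ :
        LargeSumVtx R M) v := by
    intro B hB0 hBle
    by_cases hB : B = v.1
    · have : v = ⟨B, hB0, fun hl => v.2.2 (isLarge_mono hBle hl)⟩ := Subtype.ext hB.symm
      rw [← this]
    · refine SimpleGraph.Adj.reachable ?_
      refine ⟨fun he => hB (congrArg Subtype.val he), ?_⟩
      have hsup : B ⊔ v.1 = v.1 := sup_eq_right.mpr hBle
      rw [hsup]
      exact v.2.2
  -- u.1 and v.1 intersect trivially
  have hNK : u.1 ⊓ v.1 = ⊥ := by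
    by_contra hne
    have hnl : ¬ IsLarge (u.1 ⊓ v.1) := fun hl => u.2.2 (isLarge_mono inf_le_left hl)
    exact huv (((vert_left _ hne inf_le_left)).trans (vert_right _ hne inf_le_right))
  -- key: sums of nonzero submodules from the two sides are large
  have hstar : ∀ A B : Submodule R M, A ≠ ⊥ → B ≠ ⊥ → A ≤ u.1 → B ≤ v.1 →
      IsLarge (A ⊔ B) := by
    intro A B hA0 hB0 hAle hBle
    by_contra hnl
    by_cases hAB : A = B
    · subst hAB
      exact huv ((vert_left A hA0 hAle).trans (vert_right A hA0 hBle))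
    · have hadj : (largeSumGraph R M).Adj
          ⟨A, hA0, fun hl => u.2.2 (isLarge_mono hAle hl)⟩
          ⟨B, hB0, fun hl => v.2.2 (isLarge_mono hBle hl)⟩ :=
        ⟨fun he => hAB (congrArg Subtype.val he), hnl⟩
      exact huv (((vert_left A hA0 hAle).trans hadj.reachable).trans
        (vert_right B hB0 hBle))
  -- pick the two atoms
  obtain ⟨S₁, hS₁, hS₁le⟩ := exists_atom_le hc u.2.1
  obtain ⟨S₂, hS₂, hS₂le⟩ := exists_atom_le hc v.2.1
  have hS₁₂ : S₁ ≠ S₂ := by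
    intro he
    have : S₁ ≤ u.1 ⊓ v.1 := le_inf hS₁le (he ▸ hS₂le)
    rw [hNK, le_bot_iff] at this
    exact hS₁.1 this
  refine ⟨S₁, S₂, hS₁₂, ?_⟩
  -- atoms are disjoint from or below any submodule
  have hcase : ∀ (S P : Submodule R M), IsAtom S → S ⊓ P = ⊥ ∨ S ≤ P := by
    intro S P hS
    rcases lt_or_eq_of_le (inf_le_left : S ⊓ P ≤ S) with h' | h'
    · exact Or.inl (hS.2 _ h')
    · exact Or.inr (inf_eq_left.mp h')
  have hdisj : ∀ (S S' : Submodule R M), IsAtom S → IsAtom S' → S ≠ S' → S ⊓ S' = ⊥ := by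
    intro S S' hS hS' hne
    rcases hcase S S' hS with h' | h'
    · exact h'
    · rcases lt_or_eq_of_le h' with h'' | h''
      · exact absurd (hS'.2 _ h'') hS.1
      · exact absurd h'' hne
  -- the main argument: an atom below u.1 (resp. v.1) must equal S₁ (resp. S₂)
  have key : ∀ (S T : Submodule R M) (W C : Submodule R M), IsAtom S → IsAtom T →
      S ≤ W → T ≤ W → W ⊓ C = ⊥ → ¬ IsLarge C →
      IsLarge (S ⊔ C) → IsLarge (T ⊔ C) → S = T := by
    intro S T W C hS hT hSW hTW hWC hCnl hl1 hl2
    by_contra hne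
    have hST : S ⊓ T = ⊥ := hdisj S T hS hT hne
    -- Z := (S ⊔ C) ⊓ T is a diagonal, hence ⊥
    have hZ : (S ⊔ C) ⊓ T = ⊥ := by
      refine no_diagonal hc (A := S) (B := C) ?_ inf_le_left ?_ ?_
      · exact le_bot_iff.mp (le_trans (inf_le_inf_right C hSW) hWC.le)
      · have h1 : (S ⊔ C) ⊓ T ⊓ S ≤ T ⊓ S := inf_le_inf_right S inf_le_right
        have h2 : T ⊓ S = ⊥ := by rw [inf_comm]; exact hST
        exact le_bot_iff.mp (h2 ▸ h1)
      · have h1 : (S ⊔ C) ⊓ T ⊓ C ≤ T ⊓ C := inf_le_inf_right C inf_le_right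
        exact le_bot_iff.mp (le_trans h1 (le_trans (inf_le_inf_right C hTW) hWC.le))
    -- modularity: (S ⊔ C) ⊓ (T ⊔ C) = C, so C would be large
    have hmod : (S ⊔ C) ⊓ T ⊔ C = (S ⊔ C) ⊓ (T ⊔ C) :=
      inf_sup_assoc_of_le T le_sup_right
    have hCeq : (S ⊔ C) ⊓ (T ⊔ C) = C := by rw [← hmod, hZ, bot_sup_eq]
    exact hCnl (hCeq ▸ isLarge_inf hl1 hl2)
  -- set equality
  apply le_antisymm
  · intro S hS
    simp only [Set.mem_setOf_eq] at hS
    simp only [Set.mem_insert_iff, Set.mem_singleton_iff]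
    rcases hcase S u.1 hS with hSu | hSu
    · rcases hcase S v.1 hS with hSv | hSv
      · -- S meets neither side: contradicts largeness of u.1 ⊔ v.1
        exfalso
        have hlNK : IsLarge (u.1 ⊔ v.1) := hstar u.1 v.1 u.2.1 v.2.1 le_rfl le_rfl
        have hZ : S ⊓ (u.1 ⊔ v.1) = ⊥ := by
          refine no_diagonal hc hNK inf_le_right ?_ ?_
          · exact le_bot_iff.mp (le_trans (inf_le_inf_right u.1 inf_le_left) hSu.le)
          · exact le_bot_iff.mp (le_trans (inf_le_inf_right v.1 inf_le_left) hSv.le)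
        exact hlNK S hS.1 (by rwa [inf_comm] at hZ)
      · -- S ≤ v.1 : S = S₂
        right
        refine key S S₂ v.1 u.1 hS hS₂ hSv hS₂le (by rwa [inf_comm]) u.2.2 ?_ ?_
        · rw [sup_comm]; exact hstar u.1 S u.2.1 hS.1 le_rfl hSv
        · rw [sup_comm]; exact hstar u.1 S₂ u.2.1 hS₂.1 le_rfl hS₂le
    · -- S ≤ u.1 : S = S₁
      left
      refine key S S₁ u.1 v.1 hS hS₁ hSu hS₁le hNK v.2.2 ?_ ?_
      · exact hstar S v.1 hS.1 v.2.1 hSu le_rfl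
      · exact hstar S₁ v.1 hS₁.1 v.2.1 hS₁le le_rfl
  · intro S hS
    simp only [Set.mem_insert_iff, Set.mem_singleton_iff] at hS
    rcases hS with rfl | rfl
    · exact hS₁
    · exact hS₂
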